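/- arXiv:2210.02717 — 4 statements merged into one kernel-verified Lean document; each statement's English description precedes it below -/
import Mathlib

section
/- Let f : ℝ → ℝ be a bounded continuous function on [0, ∞). Then for every x > 0, the Szász-type operator value S_u(x) = e^{−u x} · Σ_{k=0}^{∞} f(k/u) · (u x)^k / k! converges to f(x) as u → ∞. (Equivalently, writing S_u(x) = Σ_{k=0}^{∞} (1/u) f(k/u) · u^{k+1} x^k e^{−u x} / k!, an arbitrary bounded continuous function on (0, ∞) is the limit of mixtures of Gamma densities with rate u and shapes k+1 and weights (1/u) f(k/u).) -/
open Real Filter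

lemma tsum_exp' (t : ℝ) : ∑' k : ℕ, t ^ k / (Nat.factorial k : ℝ) = Real.exp t := by
  rw [Real.exp_eq_exp_ℝ, NormedSpace.exp_eq_tsum_div]

lemma summable0 (t : ℝ) : Summable (fun k : ℕ => t ^ k / (Nat.factorial k : ℝ)) :=
  Real.summable_pow_div_factorial t

lemma shift1 (t : ℝ) (k : ℕ) :
    ((k + 1 : ℕ) : ℝ) * t ^ (k + 1) / (Nat.factorial (k + 1) : ℝ)
      = t * (t ^ k / (Nat.factorial k : ℝ)) := by
  rw [Nat.factorial_succ]
  have h0 : (Nat.factorial k : ℝ) ≠ 0 := Nat.cast_ne_zero.mpr (Nat.factorial_ne_zero k)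
  push_cast
  field_simp
  ring

lemma summable1 (t : ℝ) : Summable (fun k : ℕ => (k : ℝ) * t ^ k / (Nat.factorial k : ℝ)) := by
  rw [← summable_nat_add_iff 1]
  exact ((summable0 t).mul_left t).congr fun k => (shift1 t k).symm

lemma tsum1 (t : ℝ) :
    ∑' k : ℕ, (k : ℝ) * t ^ k / (Nat.factorial k : ℝ) = t * Real.exp t := by
  have h : ∀ b : ℕ, ((b : ℝ) + 1) * t ^ (b + 1) / (Nat.factorial (b + 1) : ℝ)
      = t * (t ^ b / (Nat.factorial b : ℝ)) := by
    intro b; rw [← Nat.cast_add_one]; exact shift1 t b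
  rw [Summable.tsum_eq_zero_add (summable1 t)]
  push_cast
  rw [tsum_congr h, tsum_mul_left, tsum_exp']
  simp

lemma shift2 (t : ℝ) (k : ℕ) :
    ((k + 1 : ℕ) : ℝ) ^ 2 * t ^ (k + 1) / (Nat.factorial (k + 1) : ℝ)
      = t * ((k : ℝ) * t ^ k / (Nat.factorial k : ℝ)) + t * (t ^ k / (Nat.factorial k : ℝ)) := by
  rw [Nat.factorial_succ]
  have h0 : (Nat.factorial k : ℝ) ≠ 0 := Nat.cast_ne_zero.mpr (Nat.factorial_ne_zero k)
  push_cast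
  field_simp
  ring

lemma summable2 (t : ℝ) : Summable (fun k : ℕ => (k : ℝ) ^ 2 * t ^ k / (Nat.factorial k : ℝ)) := by
  rw [← summable_nat_add_iff 1]
  exact (((summable1 t).mul_left t).add ((summable0 t).mul_left t)).congr
    fun k => (shift2 t k).symm

lemma tsum2 (t : ℝ) :
    ∑' k : ℕ, (k : ℝ) ^ 2 * t ^ k / (Nat.factorial k : ℝ) = (t ^ 2 + t) * Real.exp t := by
  have h : ∀ b : ℕ, ((b : ℝ) + 1) ^ 2 * t ^ (b + 1) / (Nat.factorial (b + 1) : ℝ)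
      = t * ((b : ℝ) * t ^ b / (Nat.factorial b : ℝ)) + t * (t ^ b / (Nat.factorial b : ℝ)) := by
    intro b; rw [← Nat.cast_add_one]; exact shift2 t b
  rw [Summable.tsum_eq_zero_add (summable2 t)]
  push_cast
  rw [tsum_congr h, Summable.tsum_add (((summable1 t).mul_left t)) ((summable0 t).mul_left t),
    tsum_mul_left, tsum_mul_left, tsum1, tsum_exp']
  ring

lemma summable_var (u x t : ℝ) :
    Summable (fun k : ℕ => ((k : ℝ) / u - x) ^ 2 * (t ^ k / (Nat.factorial k : ℝ))) := by
  have hrew : ∀ k : ℕ, ((k : ℝ) / u - x) ^ 2 * (t ^ k / (Nat.factorial k : ℝ))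
      = (1 / u ^ 2) * ((k : ℝ) ^ 2 * t ^ k / (Nat.factorial k : ℝ))
        - (2 * x / u) * ((k : ℝ) * t ^ k / (Nat.factorial k : ℝ))
        + x ^ 2 * (t ^ k / (Nat.factorial k : ℝ)) := by
    intro k; ring
  exact ((((summable2 t).mul_left _).sub ((summable1 t).mul_left _)).add
    ((summable0 t).mul_left _)).congr fun k => (hrew k).symm

lemma tsum_var (u x : ℝ) (hu : 0 < u) :
    ∑' k : ℕ, ((k : ℝ) / u - x) ^ 2 * ((u * x) ^ k / (Nat.factorial k : ℝ))
      = (x / u) * Real.exp (u * x) := by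
  set t := u * x with ht
  have hrew : ∀ k : ℕ, ((k : ℝ) / u - x) ^ 2 * (t ^ k / (Nat.factorial k : ℝ))
      = (1 / u ^ 2) * ((k : ℝ) ^ 2 * t ^ k / (Nat.factorial k : ℝ))
        - (2 * x / u) * ((k : ℝ) * t ^ k / (Nat.factorial k : ℝ))
        + x ^ 2 * (t ^ k / (Nat.factorial k : ℝ)) := by
    intro k; ring
  rw [tsum_congr hrew,
    Summable.tsum_add ((((summable2 t).mul_left _).sub ((summable1 t).mul_left _)))
      ((summable0 t).mul_left _),
    Summable.tsum_sub ((summable2 t).mul_left _) ((summable1 t).mul_left _),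
    tsum_mul_left, tsum_mul_left, tsum_mul_left, tsum1, tsum2, tsum_exp', ht]
  field_simp
  ring

/-- For a bounded continuous function `f` on `[0, ∞)` and every `x > 0`,
the Szász-type operator value
`S_u(x) = e^{-u x} · Σ_{k=0}^{∞} f(k/u) (u x)^k / k!` converges to `f x` as `u → ∞`. -/
theorem szasz_operator_tendsto (f : ℝ → ℝ)
    (hf_cont : ContinuousOn f (Set.Ici 0))
    (hf_bdd : ∃ C : ℝ, ∀ x : ℝ, 0 ≤ x → |f x| ≤ C) :
    ∀ x : ℝ, 0 < x →
      Tendsto (fun u : ℝ =>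
          Real.exp (-(u * x)) *
            ∑' k : ℕ, f ((k : ℝ) / u) * (u * x) ^ k / (Nat.factorial k : ℝ))
        atTop (nhds (f x)) := by
  intro x hx
  obtain ⟨C, hC⟩ := hf_bdd
  have hC0 : 0 ≤ C := le_trans (abs_nonneg _) (hC x hx.le)
  have hfx : ContinuousAt f x := hf_cont.continuousAt (Ici_mem_nhds hx)
  rw [Metric.tendsto_atTop]
  intro ε hε
  obtain ⟨δ, hδ, hδf⟩ := Metric.continuousAt_iff.mp hfx (ε / 2) (by positivity)
  refine ⟨max 1 (4 * C * x / (δ ^ 2 * ε) + 1), fun u hu => ?_⟩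
  have hu1 : (1 : ℝ) ≤ u := le_trans (le_max_left _ _) hu
  have hu0 : 0 < u := lt_of_lt_of_le one_pos hu1
  set t := u * x with ht
  have ht0 : 0 < t := mul_pos hu0 hx
  -- pointwise bound
  have key : ∀ k : ℕ, |f ((k : ℝ) / u) - f x| ≤ ε / 2 + (2 * C / δ ^ 2) * ((k : ℝ) / u - x) ^ 2 := by
    intro k
    by_cases h : |(k : ℝ) / u - x| < δ
    · have h1 : dist (f ((k : ℝ) / u)) (f x) < ε / 2 := hδf (by rwa [Real.dist_eq])
      rw [Real.dist_eq] at h1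
      have h2 : 0 ≤ (2 * C / δ ^ 2) * ((k : ℝ) / u - x) ^ 2 := by positivity
      linarith
    · push_neg at h
      have h1 : |f ((k : ℝ) / u) - f x| ≤ 2 * C := by
        have a1 := hC ((k : ℝ) / u) (by positivity)
        have a2 := hC x hx.le
        calc |f ((k : ℝ) / u) - f x| ≤ |f ((k : ℝ) / u)| + |f x| := abs_sub _ _
          _ ≤ 2 * C := by linarith
      have h2 : δ ^ 2 ≤ ((k : ℝ) / u - x) ^ 2 := by
        have := sq_abs ((k : ℝ) / u - x)
        nlinarith [abs_nonneg ((k : ℝ) / u - x)]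
      have h3 : 2 * C ≤ (2 * C / δ ^ 2) * ((k : ℝ) / u - x) ^ 2 := by
        rw [div_mul_eq_mul_div, le_div_iff₀ (by positivity)]
        nlinarith
      linarith
  -- summability facts
  have s0 := summable0 t
  have sf : Summable (fun k : ℕ => f ((k : ℝ) / u) * (t ^ k / (Nat.factorial k : ℝ))) := by
    apply Summable.of_abs
    apply Summable.of_nonneg_of_le (fun k => abs_nonneg _) ?_ (s0.mul_left C)
    intro k
    rw [abs_mul, abs_of_nonneg (by positivity : (0:ℝ) ≤ t ^ k / (Nat.factorial k : ℝ))]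
    exact mul_le_mul_of_nonneg_right (hC _ (by positivity)) (by positivity)
  have sdiff : Summable (fun k : ℕ => (f ((k : ℝ) / u) - f x) * (t ^ k / (Nat.factorial k : ℝ))) := by
    have hrw : (fun k : ℕ => (f ((k : ℝ) / u) - f x) * (t ^ k / (Nat.factorial k : ℝ)))
        = fun k : ℕ => f ((k : ℝ) / u) * (t ^ k / (Nat.factorial k : ℝ))
          - f x * (t ^ k / (Nat.factorial k : ℝ)) := funext fun k => by ring
    rw [hrw]
    exact sf.sub (s0.mul_left (f x))
  have svar := summable_var u x t
  have sb : Summable (fun k : ℕ =>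
      (ε / 2 + (2 * C / δ ^ 2) * ((k : ℝ) / u - x) ^ 2) * (t ^ k / (Nat.factorial k : ℝ))) := by
    have hrw : ∀ k : ℕ,
        (ε / 2 + (2 * C / δ ^ 2) * ((k : ℝ) / u - x) ^ 2) * (t ^ k / (Nat.factorial k : ℝ))
        = (ε / 2) * (t ^ k / (Nat.factorial k : ℝ))
          + (2 * C / δ ^ 2) * (((k : ℝ) / u - x) ^ 2 * (t ^ k / (Nat.factorial k : ℝ))) := by
      intro k; ring
    exact ((s0.mul_left _).add (svar.mul_left _)).congr fun k => (hrw k).symm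
  -- rewrite the operator
  have hSrw : ∑' k : ℕ, f ((k : ℝ) / u) * (u * x) ^ k / (Nat.factorial k : ℝ)
      = ∑' k : ℕ, f ((k : ℝ) / u) * (t ^ k / (Nat.factorial k : ℝ)) :=
    tsum_congr fun k => by rw [← ht, mul_div_assoc]
  have hdiff : ∑' k : ℕ, (f ((k : ℝ) / u) - f x) * (t ^ k / (Nat.factorial k : ℝ))
      = (∑' k : ℕ, f ((k : ℝ) / u) * (t ^ k / (Nat.factorial k : ℝ))) - f x * Real.exp t := by
    calc ∑' k : ℕ, (f ((k : ℝ) / u) - f x) * (t ^ k / (Nat.factorial k : ℝ))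
        = ∑' k : ℕ, (f ((k : ℝ) / u) * (t ^ k / (Nat.factorial k : ℝ))
            - f x * (t ^ k / (Nat.factorial k : ℝ))) := tsum_congr fun k => by ring
      _ = (∑' k : ℕ, f ((k : ℝ) / u) * (t ^ k / (Nat.factorial k : ℝ)))
            - ∑' k : ℕ, f x * (t ^ k / (Nat.factorial k : ℝ)) := Summable.tsum_sub sf (s0.mul_left _)
      _ = _ := by rw [tsum_mul_left, tsum_exp']
  have hid : Real.exp (-t) * (∑' k : ℕ, f ((k : ℝ) / u) * (t ^ k / (Nat.factorial k : ℝ))) - f x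
      = Real.exp (-t) * ∑' k : ℕ, (f ((k : ℝ) / u) - f x) * (t ^ k / (Nat.factorial k : ℝ)) := by
    rw [hdiff, mul_sub, Real.exp_neg]
    have : (Real.exp t)⁻¹ * (f x * Real.exp t) = f x := by
      field_simp
    rw [this]
  rw [Real.dist_eq, hSrw, hid, abs_mul, abs_of_pos (Real.exp_pos _)]
  have step1 : |∑' k : ℕ, (f ((k : ℝ) / u) - f x) * (t ^ k / (Nat.factorial k : ℝ))|
      ≤ ∑' k : ℕ, |(f ((k : ℝ) / u) - f x) * (t ^ k / (Nat.factorial k : ℝ))| := by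
    have hsn : Summable (fun k : ℕ =>
        ‖(f ((k : ℝ) / u) - f x) * (t ^ k / (Nat.factorial k : ℝ))‖) := by
      simpa only [Real.norm_eq_abs] using sdiff.abs
    simpa only [Real.norm_eq_abs] using norm_tsum_le_tsum_norm hsn
  have step2 : ∑' k : ℕ, |(f ((k : ℝ) / u) - f x) * (t ^ k / (Nat.factorial k : ℝ))|
      ≤ ∑' k : ℕ, (ε / 2 + (2 * C / δ ^ 2) * ((k : ℝ) / u - x) ^ 2)
          * (t ^ k / (Nat.factorial k : ℝ)) := by
    apply Summable.tsum_le_tsum _ sdiff.abs sb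
    intro k
    rw [abs_mul, abs_of_nonneg (by positivity : (0:ℝ) ≤ t ^ k / (Nat.factorial k : ℝ))]
    exact mul_le_mul_of_nonneg_right (key k) (by positivity)
  have step3 : ∑' k : ℕ, (ε / 2 + (2 * C / δ ^ 2) * ((k : ℝ) / u - x) ^ 2)
        * (t ^ k / (Nat.factorial k : ℝ))
      = (ε / 2) * Real.exp t + (2 * C / δ ^ 2) * ((x / u) * Real.exp t) := by
    have hrw : ∀ k : ℕ,
        (ε / 2 + (2 * C / δ ^ 2) * ((k : ℝ) / u - x) ^ 2) * (t ^ k / (Nat.factorial k : ℝ))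
        = (ε / 2) * (t ^ k / (Nat.factorial k : ℝ))
          + (2 * C / δ ^ 2) * (((k : ℝ) / u - x) ^ 2 * (t ^ k / (Nat.factorial k : ℝ))) := by
      intro k; ring
    rw [tsum_congr hrw, Summable.tsum_add (s0.mul_left _) (svar.mul_left _), tsum_mul_left,
      tsum_mul_left, tsum_exp']
    congr 1
    rw [ht, tsum_var u x hu0]
  have hbound : Real.exp (-t)
        * |∑' k : ℕ, (f ((k : ℝ) / u) - f x) * (t ^ k / (Nat.factorial k : ℝ))|
      ≤ ε / 2 + (2 * C / δ ^ 2) * (x / u) := by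
    have h4 : Real.exp (-t)
          * |∑' k : ℕ, (f ((k : ℝ) / u) - f x) * (t ^ k / (Nat.factorial k : ℝ))|
        ≤ Real.exp (-t) * ((ε / 2) * Real.exp t + (2 * C / δ ^ 2) * ((x / u) * Real.exp t)) := by
      apply mul_le_mul_of_nonneg_left _ (Real.exp_pos _).le
      rw [← step3]
      exact le_trans step1 step2
    have h5 : Real.exp (-t) * ((ε / 2) * Real.exp t + (2 * C / δ ^ 2) * ((x / u) * Real.exp t))
        = ε / 2 + (2 * C / δ ^ 2) * (x / u) := by
      rw [Real.exp_neg]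
      have hne : Real.exp t ≠ 0 := (Real.exp_pos t).ne'
      field_simp
    linarith [h4, h5.le]
  -- final arithmetic
  have hu2 : 4 * C * x / (δ ^ 2 * ε) + 1 ≤ u := le_trans (le_max_right _ _) hu
  have hfin : (2 * C / δ ^ 2) * (x / u) < ε / 2 := by
    have h6 : 4 * C * x ≤ (u - 1) * (δ ^ 2 * ε) :=
      (div_le_iff₀ (by positivity : (0:ℝ) < δ ^ 2 * ε)).mp (by linarith)
    rw [div_mul_div_comm, div_lt_iff₀ (by positivity)]
    nlinarith [mul_pos (mul_pos hδ hδ) hε]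
  linarith
end

section
/- Let X₁ and X₂ be independent random variables where X₁ is Gamma-distributed with shape v₁ > 0 and rate b₁ > 0 (density b₁^{v₁} x^{v₁−1} e^{−b₁ x}/Γ(v₁) on (0,∞)) and X₂ is Gamma-distributed with shape v₂ > 0 and rate b₂ > 0. Then the product Y = X₁ X₂ has density, for y > 0, f_Y(y) = ((b₁ b₂)^{v₁} y^{v₁ − 1} / (Γ(v₁) Γ(v₂))) · ∫_0^∞ t^{v₂ − v₁ − 1} e^{−t − b₁ b₂ y / t} dt. -/
open MeasureTheory ProbabilityTheory Real Set
open scoped ENNReal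

lemma aux_integrable (a c : ℝ) (hc : 0 < c) :
    IntegrableOn (fun t => t ^ a * Real.exp (-t - c / t)) (Ioi (0:ℝ)) := by
  set n : ℕ := ⌈-a⌉₊ with hn
  have hna : -a ≤ (n:ℝ) := Nat.le_ceil _
  have hkey : ∀ x : ℝ, 0 ≤ x → x ^ n / n.factorial ≤ Real.exp x := fun x hx =>
    le_trans (Finset.single_le_sum (f := fun i => x ^ i / i.factorial)
      (fun i _ => by positivity) (Finset.self_mem_range_succ n))
      (Real.sum_le_exp_of_nonneg hx (n+1))
  have hmeas : AEStronglyMeasurable (fun t => t ^ a * Real.exp (-t - c / t))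
      (volume.restrict (Ioi (0:ℝ))) := by
    apply ContinuousOn.aestronglyMeasurable _ measurableSet_Ioi
    apply ContinuousOn.mul
    · exact fun t ht => (Real.continuousAt_rpow_const t a (Or.inl (ne_of_gt ht))).continuousWithinAt
    · exact Real.continuous_exp.comp_continuousOn
        (by fun_prop (disch := intro t ht; exact ne_of_gt ht) :
          ContinuousOn (fun t : ℝ => -t - c / t) (Ioi 0))
  refine Integrable.mono' (g := fun t => (n.factorial / c ^ n) * (Real.exp (-t) * t ^ ((a + n + 1) - 1)))
      ?_ hmeas ?_
  · exact ((Real.GammaIntegral_convergent (by linarith)).const_mul _)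
  · filter_upwards [ae_restrict_mem measurableSet_Ioi] with t ht
    have ht0 : (0:ℝ) < t := ht
    rw [Real.norm_eq_abs, abs_of_nonneg (by positivity)]
    have h1 : Real.exp (-t - c / t) = Real.exp (-t) * Real.exp (-(c / t)) := by
      rw [← Real.exp_add]; ring_nf
    have h2 : Real.exp (-(c / t)) ≤ n.factorial * t ^ n / c ^ n := by
      rw [Real.exp_neg]
      rw [inv_le_comm₀ (Real.exp_pos _) (by positivity)]
      calc (n.factorial * t ^ n / c ^ n)⁻¹ = (c / t) ^ n / n.factorial := by
            rw [inv_div, div_pow, div_div, mul_comm ((n.factorial : ℕ) : ℝ)]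
        _ ≤ Real.exp (c / t) := hkey _ (by positivity)
    have h3 : t ^ (a + (n:ℝ) + 1 - 1) = t ^ a * t ^ n := by
      rw [add_sub_cancel_right, Real.rpow_add ht0, Real.rpow_natCast]
    calc t ^ a * Real.exp (-t - c / t)
        = t ^ a * Real.exp (-t) * Real.exp (-(c/t)) := by rw [h1]; ring
      _ ≤ t ^ a * Real.exp (-t) * (n.factorial * t ^ n / c ^ n) := by
          apply mul_le_mul_of_nonneg_left h2 (by positivity)
      _ = (n.factorial / c ^ n) * (Real.exp (-t) * t ^ ((a + n + 1) - 1)) := by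
          rw [h3]; ring


lemma aux_image (c : ℝ) (hc : 0 < c) : (fun t : ℝ => c / t) '' (Ioi 0) = Ioi 0 := by
  ext z
  constructor
  · rintro ⟨t, ht, rfl⟩; exact div_pos hc ht
  · intro hz; exact ⟨c / z, div_pos hc hz, by field_simp⟩

lemma aux_deriv (c : ℝ) {t : ℝ} (ht : (0:ℝ) < t) :
    HasDerivWithinAt (fun t : ℝ => c / t) (-(c / t ^ 2)) (Ioi 0) t := by
  have := ((hasDerivAt_inv (ne_of_gt ht)).const_mul c)
  simpa [div_eq_mul_inv, mul_comm, neg_div] using this.hasDerivWithinAt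

lemma aux_inj (c : ℝ) (hc : 0 < c) : InjOn (fun t : ℝ => c / t) (Ioi 0) := by
  intro a ha b hb h
  have ha' : a ≠ 0 := ne_of_gt ha
  have hb' : b ≠ 0 := ne_of_gt hb
  simp only at h
  rw [div_eq_div_iff ha' hb'] at h
  exact (mul_left_cancel₀ (ne_of_gt hc) h).symm

lemma aux_pointwise (v₁ v₂ b₁ b₂ : ℝ) (hv₁ : 0 < v₁) (hv₂ : 0 < v₂) (hb₁ : 0 < b₁)
    (hb₂ : 0 < b₂) (y : ℝ) (hy : 0 < y) :
    ∫⁻ x in Ioi (0:ℝ), ENNReal.ofReal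
        ((b₁ ^ v₁ * x ^ (v₁ - 1) * Real.exp (-(b₁ * x)) / Real.Gamma v₁) * x⁻¹ *
          (b₂ ^ v₂ * (y / x) ^ (v₂ - 1) * Real.exp (-(b₂ * (y / x))) / Real.Gamma v₂)) =
      ENNReal.ofReal ((b₁ * b₂) ^ v₁ * y ^ (v₁ - 1) / (Real.Gamma v₁ * Real.Gamma v₂) *
        ∫ t in Ioi (0:ℝ), t ^ (v₂ - v₁ - 1) * Real.exp (-t - b₁ * b₂ * y / t)) := by
  have hΓ₁ := Real.Gamma_pos_of_pos hv₁
  have hΓ₂ := Real.Gamma_pos_of_pos hv₂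
  set c : ℝ := b₂ * y with hc
  have hc0 : 0 < c := mul_pos hb₂ hy
  set g : ℝ → ℝ := fun x =>
    (b₁ ^ v₁ * x ^ (v₁ - 1) * Real.exp (-(b₁ * x)) / Real.Gamma v₁) * x⁻¹ *
      (b₂ ^ v₂ * (y / x) ^ (v₂ - 1) * Real.exp (-(b₂ * (y / x))) / Real.Gamma v₂) with hg
  set C : ℝ := (b₁ * b₂) ^ v₁ * y ^ (v₁ - 1) / (Real.Gamma v₁ * Real.Gamma v₂) with hC
  set k : ℝ → ℝ := fun t => t ^ (v₂ - v₁ - 1) * Real.exp (-t - b₁ * b₂ * y / t) with hk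
  -- key pointwise identity on Ioi 0
  have key : ∀ t ∈ Ioi (0:ℝ), |(-(c / t ^ 2))| • g (c / t) = C * k t := by
    intro t ht
    have ht0 : (0:ℝ) < t := ht
    have hct : 0 < c / t := div_pos hc0 ht0
    have e2 : y / (c / t) = t / b₂ := by rw [hc]; field_simp
    have e5 : b₂ * (t / b₂) = t := by field_simp
    have eexp : Real.exp (-(b₁ * (c / t))) * Real.exp (-t) = Real.exp (-t - b₁ * b₂ * y / t) := by
      rw [← Real.exp_add]; congr 1; rw [hc]; ring
    have habs : |(-(c / t ^ 2))| = c / t ^ 2 := by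
      rw [abs_neg, abs_of_pos (by positivity)]
    rw [habs, smul_eq_mul]
    simp only [hg]
    rw [e2, e5]
    have r1 : (c / t) ^ (v₁ - 1) = c ^ (v₁ - 1) * (t ^ (v₁ - 1))⁻¹ := by
      rw [Real.div_rpow hc0.le ht0.le, div_eq_mul_inv]
    have r2 : (t / b₂) ^ (v₂ - 1) = t ^ (v₂ - 1) * (b₂ ^ (v₂ - 1))⁻¹ := by
      rw [Real.div_rpow ht0.le hb₂.le, div_eq_mul_inv]
    have r3 : t ^ (v₂ - v₁ - 1) = t ^ (v₂ - 1) * (t ^ (v₁ - 1))⁻¹ * t⁻¹ := by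
      rw [show v₂ - v₁ - 1 = (v₂ - 1) - (v₁ - 1) - 1 by ring, Real.rpow_sub ht0,
        Real.rpow_sub ht0, Real.rpow_one, div_eq_mul_inv, div_eq_mul_inv]
    have r4 : c ^ (v₁ - 1) = b₂ ^ (v₁ - 1) * y ^ (v₁ - 1) := Real.mul_rpow hb₂.le hy.le
    have r5 : (b₁ * b₂) ^ v₁ = b₁ ^ v₁ * (b₂ ^ (v₁ - 1) * b₂) := by
      rw [Real.mul_rpow hb₁.le hb₂.le]
      congr 1
      have h := Real.rpow_add hb₂ (v₁ - 1) 1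
      rw [show v₁ - 1 + 1 = v₁ by ring, Real.rpow_one] at h
      exact h
    have r6 : b₂ ^ v₂ = b₂ ^ (v₂ - 1) * b₂ := by
      have h := Real.rpow_add hb₂ (v₂ - 1) 1
      rw [show v₂ - 1 + 1 = v₂ by ring, Real.rpow_one] at h
      exact h
    simp only [hk, hC]
    rw [r3, r5, r1, r2, r4, r6, ← eexp, hc]
    have ht1 : (t:ℝ) ^ (v₁ - 1) ≠ 0 := ne_of_gt (Real.rpow_pos_of_pos ht0 _)
    have ht2 : (t:ℝ) ^ (v₂ - 1) ≠ 0 := ne_of_gt (Real.rpow_pos_of_pos ht0 _)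
    have hb2' : b₂ ^ (v₂ - 1) ≠ 0 := ne_of_gt (Real.rpow_pos_of_pos hb₂ _)
    field_simp
  -- integrability
  have hkint : IntegrableOn k (Ioi 0) := by
    have := aux_integrable (v₂ - v₁ - 1) (b₁ * b₂ * y) (by positivity)
    exact this
  have hCk : IntegrableOn (fun t => |(-(c / t ^ 2))| • g (c / t)) (Ioi 0) := by
    exact IntegrableOn.congr_fun (hkint.const_mul C) (fun t ht => (key t ht).symm) measurableSet_Ioi
  have hgint : IntegrableOn g (Ioi 0) := by
    have h := integrableOn_image_iff_integrableOn_abs_deriv_smul measurableSet_Ioi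
      (fun t ht => aux_deriv c (show (0:ℝ) < t from ht)) (aux_inj c hc0) g
    rw [aux_image c hc0] at h
    exact h.mpr hCk
  have hgnn : 0 ≤ᵐ[volume.restrict (Ioi (0:ℝ))] g := by
    filter_upwards [ae_restrict_mem measurableSet_Ioi] with x hx
    have hx0 : (0:ℝ) < x := hx
    have : 0 < y / x := div_pos hy hx0
    rw [hg]
    have := Real.rpow_pos_of_pos hx0 (v₁ - 1)
    positivity
  rw [← MeasureTheory.ofReal_integral_eq_lintegral_ofReal hgint hgnn]
  congr 1
  calc ∫ x in Ioi (0:ℝ), g x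
      = ∫ x in (fun t : ℝ => c / t) '' (Ioi 0), g x := by rw [aux_image c hc0]
    _ = ∫ t in Ioi (0:ℝ), |(-(c / t ^ 2))| • g (c / t) :=
        integral_image_eq_integral_abs_deriv_smul measurableSet_Ioi
          (fun t ht => aux_deriv c (show (0:ℝ) < t from ht)) (aux_inj c hc0) g
    _ = ∫ t in Ioi (0:ℝ), C * k t :=
        setIntegral_congr_fun measurableSet_Ioi key
    _ = C * ∫ t in Ioi (0:ℝ), k t := MeasureTheory.integral_const_mul _ _

/-- If `X₁ ~ Gamma(v₁, b₁)` and `X₂ ~ Gamma(v₂, b₂)` are independent, then the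
product `Y = X₁ X₂` has density
`f_Y(y) = ((b₁ b₂)^{v₁} y^{v₁-1} / (Γ(v₁) Γ(v₂))) ∫_0^∞ t^{v₂-v₁-1} e^{-t - b₁ b₂ y / t} dt`
for `y > 0`. -/
theorem gamma_product_density {Ω : Type*} [MeasurableSpace Ω]
    (μ : Measure Ω) [IsProbabilityMeasure μ]
    (X₁ X₂ : Ω → ℝ) (hX₁ : Measurable X₁) (hX₂ : Measurable X₂)
    (hindep : IndepFun X₁ X₂ μ)
    (v₁ v₂ b₁ b₂ : ℝ) (hv₁ : 0 < v₁) (hv₂ : 0 < v₂) (hb₁ : 0 < b₁) (hb₂ : 0 < b₂)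
    (h₁ : Measure.map X₁ μ = volume.withDensity (fun x =>
      ENNReal.ofReal (Set.indicator (Set.Ioi 0)
        (fun x => b₁ ^ v₁ * x ^ (v₁ - 1) * Real.exp (-(b₁ * x)) / Real.Gamma v₁) x)))
    (h₂ : Measure.map X₂ μ = volume.withDensity (fun x =>
      ENNReal.ofReal (Set.indicator (Set.Ioi 0)
        (fun x => b₂ ^ v₂ * x ^ (v₂ - 1) * Real.exp (-(b₂ * x)) / Real.Gamma v₂) x))) :
    Measure.map (fun ω => X₁ ω * X₂ ω) μ = volume.withDensity (fun y =>
      ENNReal.ofReal (Set.indicator (Set.Ioi 0)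
        (fun y => (b₁ * b₂) ^ v₁ * y ^ (v₁ - 1) / (Real.Gamma v₁ * Real.Gamma v₂) *
          ∫ t in Set.Ioi (0:ℝ), t ^ (v₂ - v₁ - 1) * Real.exp (-t - b₁ * b₂ * y / t)) y)) := by
  have hmul : Measurable (fun p : ℝ × ℝ => p.1 * p.2) := measurable_fst.mul measurable_snd
  haveI hP1 : IsProbabilityMeasure (μ.map X₁) := Measure.isProbabilityMeasure_map hX₁.aemeasurable
  haveI hP2 : IsProbabilityMeasure (μ.map X₂) := Measure.isProbabilityMeasure_map hX₂.aemeasurable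
  set f₁ : ℝ → ℝ := fun x => b₁ ^ v₁ * x ^ (v₁ - 1) * Real.exp (-(b₁ * x)) / Real.Gamma v₁ with hf₁
  set f₂ : ℝ → ℝ := fun x => b₂ ^ v₂ * x ^ (v₂ - 1) * Real.exp (-(b₂ * x)) / Real.Gamma v₂ with hf₂
  set g : ℝ → ℝ := fun y => (b₁ * b₂) ^ v₁ * y ^ (v₁ - 1) / (Real.Gamma v₁ * Real.Gamma v₂) *
          ∫ t in Set.Ioi (0:ℝ), t ^ (v₂ - v₁ - 1) * Real.exp (-t - b₁ * b₂ * y / t) with hgdef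
  have hrp : ∀ c : ℝ, Measurable fun x : ℝ => x ^ c := fun c => by measurability
  have hf₁m : Measurable f₁ :=
    ((measurable_const.mul (hrp (v₁ - 1))).mul
      (Real.measurable_exp.comp (measurable_const_mul b₁).neg)).div_const _
  have hf₂m : Measurable f₂ :=
    ((measurable_const.mul (hrp (v₂ - 1))).mul
      (Real.measurable_exp.comp (measurable_const_mul b₂).neg)).div_const _
  set F₁ : ℝ → ℝ≥0∞ := fun x => ENNReal.ofReal ((Ioi (0:ℝ)).indicator f₁ x) with hF₁
  set F₂ : ℝ → ℝ≥0∞ := fun x => ENNReal.ofReal ((Ioi (0:ℝ)).indicator f₂ x) with hF₂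
  have hF₁m : Measurable F₁ := ENNReal.measurable_ofReal.comp (hf₁m.indicator measurableSet_Ioi)
  have hF₂m : Measurable F₂ := ENNReal.measurable_ofReal.comp (hf₂m.indicator measurableSet_Ioi)
  -- reduce to map of product measure
  have hjoint : μ.map (fun ω => (X₁ ω, X₂ ω)) = (μ.map X₁).prod (μ.map X₂) :=
    (indepFun_iff_map_prod_eq_prod_map_map hX₁.aemeasurable hX₂.aemeasurable).mp hindep
  have hmap : μ.map (fun ω => X₁ ω * X₂ ω) =
      Measure.map (fun p : ℝ × ℝ => p.1 * p.2) ((μ.map X₁).prod (μ.map X₂)) := by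
    rw [← hjoint, Measure.map_map hmul (hX₁.prodMk hX₂)]
    rfl
  rw [hmap]
  ext s hs
  rw [Measure.map_apply hmul hs, withDensity_apply _ hs,
    Measure.prod_apply (hs.preimage hmul)]
  -- the inner measure as a function of x
  have hψm : Measurable fun x => (μ.map X₂) (Prod.mk x ⁻¹' ((fun p : ℝ × ℝ => p.1 * p.2) ⁻¹' s)) :=
    measurable_measure_prodMk_left (hs.preimage hmul)
  -- rewrite outer measure as withDensity and use lintegral_withDensity
  rw [h₁]
  rw [lintegral_withDensity_eq_lintegral_mul _ hF₁m hψm]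
  -- restrict to Ioi 0
  have step1 : ∀ x : ℝ, (F₁ * fun x => (μ.map X₂) (Prod.mk x ⁻¹' ((fun p : ℝ × ℝ => p.1 * p.2) ⁻¹' s))) x
      = (Ioi (0:ℝ)).indicator (fun x => ENNReal.ofReal (f₁ x) *
          (μ.map X₂) ((fun y => x * y) ⁻¹' s)) x := by
    intro x
    by_cases hx : x ∈ Ioi (0:ℝ)
    · simp only [Pi.mul_apply, hF₁, indicator_of_mem hx]
      rfl
    · simp only [Pi.mul_apply, hF₁, indicator_of_notMem hx, ENNReal.ofReal_zero, zero_mul]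
  rw [lintegral_congr step1, lintegral_indicator measurableSet_Ioi _]
  -- inner measure computation for x > 0
  have step2 : ∀ x : ℝ, x ∈ Ioi (0:ℝ) →
      (μ.map X₂) ((fun y => x * y) ⁻¹' s) = ENNReal.ofReal x⁻¹ * ∫⁻ z in s, F₂ (x⁻¹ * z) := by
    intro x hx
    have hx0 : (0:ℝ) < x := hx
    rw [h₂, withDensity_apply _ (hs.preimage (measurable_const_mul x)),
      ← lintegral_indicator (hs.preimage (measurable_const_mul x)) _]
    have e : ∀ y : ℝ, ((fun y => x * y) ⁻¹' s).indicator F₂ y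
        = (s.indicator fun z => F₂ (x⁻¹ * z)) (x * y) := by
      intro y
      by_cases hxy : x * y ∈ s
      · rw [indicator_of_mem (show y ∈ (fun y => x * y) ⁻¹' s from hxy),
          indicator_of_mem hxy, inv_mul_cancel_left₀ (ne_of_gt hx0)]
      · rw [indicator_of_notMem (show y ∉ (fun y => x * y) ⁻¹' s from hxy),
          indicator_of_notMem hxy]
    calc ∫⁻ y, ((fun y => x * y) ⁻¹' s).indicator F₂ y
        = ∫⁻ y, (s.indicator fun z => F₂ (x⁻¹ * z)) (x * y) := lintegral_congr e
      _ = ∫⁻ z, (s.indicator fun z => F₂ (x⁻¹ * z)) z ∂(Measure.map (x * ·) volume) :=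
          (lintegral_map ((hF₂m.comp (measurable_const_mul x⁻¹)).indicator hs)
            (measurable_const_mul x)).symm
      _ = ENNReal.ofReal x⁻¹ * ∫⁻ z in s, F₂ (x⁻¹ * z) := by
          rw [Real.map_volume_mul_left (ne_of_gt hx0), lintegral_smul_measure,
            lintegral_indicator hs _, abs_of_pos (inv_pos.mpr hx0), smul_eq_mul]
  rw [setLIntegral_congr_fun measurableSet_Ioi (fun x hx => by
    rw [step2 x hx])]
  -- pull constants into the inner lintegral
  have step3 : ∀ x : ℝ, ENNReal.ofReal (f₁ x) * (ENNReal.ofReal x⁻¹ * ∫⁻ z in s, F₂ (x⁻¹ * z))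
      = ∫⁻ z in s, (ENNReal.ofReal (f₁ x) * ENNReal.ofReal x⁻¹) * F₂ (x⁻¹ * z) := by
    intro x
    have hm : Measurable fun z : ℝ => F₂ (x⁻¹ * z) := hF₂m.comp (measurable_const_mul x⁻¹)
    rw [lintegral_const_mul _ hm, mul_assoc]
  rw [setLIntegral_congr_fun measurableSet_Ioi (fun x _ => step3 x)]
  -- swap the integrals
  rw [lintegral_lintegral_swap (by
    apply Measurable.aemeasurable
    exact (((ENNReal.measurable_ofReal.comp (hf₁m.comp measurable_fst)).mul
      (ENNReal.measurable_ofReal.comp (measurable_fst.inv))).mul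
      (hF₂m.comp (measurable_fst.inv.mul measurable_snd))))]
  -- identify the inner integral with the density g
  refine lintegral_congr (fun z => ?_)
  by_cases hz : z ∈ Ioi (0:ℝ)
  · have hz0 : (0:ℝ) < z := hz
    rw [indicator_of_mem hz]
    have ee : ∀ x : ℝ, x ∈ Ioi (0:ℝ) →
        (ENNReal.ofReal (f₁ x) * ENNReal.ofReal x⁻¹) * F₂ (x⁻¹ * z)
        = ENNReal.ofReal ((f₁ x) * x⁻¹ * (f₂ (z / x))) := by
      intro x hx
      have hx0 : (0:ℝ) < x := hx
      have hmem : x⁻¹ * z ∈ Ioi (0:ℝ) := mul_pos (inv_pos.mpr hx0) hz0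
      simp only [hF₂]
      rw [indicator_of_mem hmem, inv_mul_eq_div,
        ← ENNReal.ofReal_mul (by rw [hf₁]; positivity),
        ← ENNReal.ofReal_mul (by rw [hf₁]; positivity)]
    rw [setLIntegral_congr_fun measurableSet_Ioi ee]
    exact aux_pointwise v₁ v₂ b₁ b₂ hv₁ hv₂ hb₁ hb₂ z hz0
  · rw [indicator_of_notMem hz, ENNReal.ofReal_zero]
    have ee : ∀ x : ℝ, x ∈ Ioi (0:ℝ) →
        (ENNReal.ofReal (f₁ x) * ENNReal.ofReal x⁻¹) * F₂ (x⁻¹ * z) = 0 := by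
      intro x hx
      have hx0 : (0:ℝ) < x := hx
      have hz0 : z ≤ 0 := not_lt.mp hz
      have hmem : x⁻¹ * z ∉ Ioi (0:ℝ) := by
        simp only [mem_Ioi, not_lt]
        exact mul_nonpos_of_nonneg_of_nonpos (inv_pos.mpr hx0).le hz0
      simp only [hF₂]
      rw [indicator_of_notMem hmem, ENNReal.ofReal_zero, mul_zero]
    rw [setLIntegral_congr_fun measurableSet_Ioi ee, lintegral_zero]
end

section
/- Let A > 0, z > 0, 0 < c < 1, and let n be a natural number. Then ∫_0^z x^n e^{−A (x − c z)²} dx = (1/2) Σ_{k=0}^{n} C(n, k) (c z)^{n − k} A^{−(k+1)/2} · [ γ((k+1)/2, A (1 − c)² z²) + (−1)^k γ((k+1)/2, A c² z²) ], where C(n,k) is the binomial coefficient and γ(s, y) = ∫_0^y t^{s−1} e^{−t} dt is the lower incomplete Gamma function. -/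
open Real MeasureTheory Set intervalIntegral Interval

/-- The lower incomplete Gamma function `γ(s, y) = ∫_0^y t^{s-1} e^{-t} dt`. -/
noncomputable def lowerIncGamma (s y : ℝ) : ℝ :=
  ∫ t in (0:ℝ)..y, t ^ (s - 1) * Real.exp (-t)

lemma key (A : ℝ) (hA : 0 < A) (k : ℕ) (b : ℝ) (hb : 0 ≤ b) :
    ∫ u in (0:ℝ)..b, u ^ k * Real.exp (-(A * u ^ 2)) =
      (1 / 2) * A ^ (-(((k : ℝ) + 1) / 2)) *
        lowerIncGamma (((k : ℝ) + 1) / 2) (A * b ^ 2) := by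
  set s : ℝ := ((k : ℝ) + 1) / 2 with hs
  have hs1 : (-1 : ℝ) < s - 1 := by
    have : (0:ℝ) ≤ (k:ℝ) := Nat.cast_nonneg k
    simp only [hs]; linarith
  set g : ℝ → ℝ := fun t => t ^ (s - 1) * Real.exp (-t) with hg
  set f : ℝ → ℝ := fun u => A * u ^ 2 with hf
  have heq : ∀ u : ℝ, 0 < u →
      2 * A ^ s * u ^ k * Real.exp (-(A * u ^ 2)) = (2 * A * u) • (g ∘ f) u := by
    intro u hu0
    have hAu : (0:ℝ) < A * u ^ 2 := by positivity
    have hrw : (A * u ^ 2) ^ (s - 1) = A ^ (s - 1) * u ^ ((k : ℝ) - 1) := by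
      rw [Real.mul_rpow hA.le (by positivity), ← Real.rpow_natCast u 2,
        ← Real.rpow_mul hu0.le]
      congr 1
      push_cast [hs]
      ring
    simp only [Function.comp, hg, hf, smul_eq_mul, hrw]
    have h1 : u ^ ((k:ℝ) - 1) = u ^ k / u := by
      rw [Real.rpow_sub hu0, Real.rpow_natCast, Real.rpow_one]
    have h2 : A ^ (s - 1) * A = A ^ s := by
      nth_rewrite 2 [← Real.rpow_one A]
      rw [← Real.rpow_add hA]; ring_nf
    rw [h1, ← h2]
    field_simp
  -- change of variables: γ(s, A b²) = ∫ u in 0..b, (2*A*u) • g (f u)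
  have hcov : (∫ u in (0:ℝ)..b, (2 * A * u) • (g ∘ f) u) = ∫ t in (f 0)..(f b), g t := by
    apply integral_comp_smul_deriv'''
    · exact (continuous_const.mul (continuous_pow 2)).continuousOn
    · intro x hx
      have : HasDerivAt f (2 * A * x) x := by
        simpa [mul_comm, mul_assoc, mul_left_comm] using (hasDerivAt_pow 2 x).const_mul A
      exact this.hasDerivWithinAt
    · intro t ht
      obtain ⟨x, hx, rfl⟩ := ht
      rw [min_eq_left hb, max_eq_right hb] at hx
      have hfx : 0 < A * x ^ 2 := mul_pos hA (pow_pos hx.1 2)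
      exact ((Real.continuousAt_rpow_const _ _ (Or.inl hfx.ne')).mul
        (Real.continuous_exp.comp continuous_neg).continuousAt).continuousWithinAt
    · -- integrable on image
      have h1 : IntegrableOn g (Icc 0 (A * b ^ 2)) := by
        have := (intervalIntegral.intervalIntegrable_rpow' (a := 0) (b := A * b ^ 2) hs1).mul_continuousOn
          (Real.continuous_exp.comp continuous_neg).continuousOn
        rwa [intervalIntegrable_iff_integrableOn_Icc_of_le
          (by positivity)] at this
      apply h1.mono_set
      rintro t ⟨x, hx, rfl⟩
      rw [uIcc_of_le hb] at hx
      constructor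
      · positivity
      · have : x ^ 2 ≤ b ^ 2 := pow_le_pow_left₀ hx.1 hx.2 2
        exact mul_le_mul_of_nonneg_left this hA.le
    · -- integrability of the substituted integrand
      have hcont : Continuous (fun u : ℝ => 2 * A ^ s * u ^ k * Real.exp (-(A * u ^ 2))) := by
        continuity
      have h2 : IntegrableOn (fun u : ℝ => 2 * A ^ s * u ^ k * Real.exp (-(A * u ^ 2))) [[0, b]] :=
        hcont.integrableOn_uIcc
      apply h2.congr_fun_ae
      have hne : ∀ᵐ u : ℝ ∂(volume.restrict [[0, b]]), u ≠ 0 := by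
        apply ae_restrict_of_ae
        rw [ae_iff]
        convert Real.volume_singleton (a := 0) using 2
        ext u; simp
      have hmem : ∀ᵐ u : ℝ ∂(volume.restrict [[0, b]]), u ∈ [[0, b]] :=
        ae_restrict_mem measurableSet_uIcc
      filter_upwards [hne, hmem] with u hu hum
      rw [uIcc_of_le hb] at hum
      exact heq u (lt_of_le_of_ne hum.1 (Ne.symm hu))
  have hfb : f b = A * b ^ 2 := rfl
  have hf0 : f 0 = 0 := by simp [hf]
  have hL : (∫ u in (0:ℝ)..b, (2 * A * u) • (g ∘ f) u)
      = 2 * A ^ s * ∫ u in (0:ℝ)..b, u ^ k * Real.exp (-(A * u ^ 2)) := by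
    rw [← intervalIntegral.integral_const_mul]
    apply intervalIntegral.integral_congr_ae
    apply ae_of_all
    intro u hu
    rw [uIoc_of_le hb] at hu
    rw [← heq u hu.1]
    ring
  rw [hf0, hfb] at hcov
  have hgamma : lowerIncGamma s (A * b ^ 2) =
      2 * A ^ s * ∫ u in (0:ℝ)..b, u ^ k * Real.exp (-(A * u ^ 2)) := by
    rw [lowerIncGamma, ← hcov, hL]
  rw [hgamma]
  have hAs : A ^ (-s) * A ^ s = 1 := by
    rw [← Real.rpow_add hA, neg_add_cancel, Real.rpow_zero]
  rw [show -(((k:ℝ)+1)/2) = -s from rfl]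
  set I := ∫ u in (0:ℝ)..b, u ^ k * Real.exp (-(A * u ^ 2))
  have : (1/2:ℝ) * A ^ (-s) * (2 * A ^ s * I) = (A ^ (-s) * A ^ s) * I := by ring
  rw [this, hAs, one_mul]


/-- For `A > 0`, `z > 0`, `0 < c < 1` and `n : ℕ`,
`∫_0^z x^n e^{-A (x - c z)²} dx
  = (1/2) Σ_{k=0}^{n} C(n,k) (c z)^{n-k} A^{-(k+1)/2}
      [γ((k+1)/2, A (1-c)² z²) + (-1)^k γ((k+1)/2, A c² z²)]`. -/
theorem integral_pow_mul_exp_neg_shifted_sq (A z c : ℝ) (hA : 0 < A) (hz : 0 < z)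
    (hc0 : 0 < c) (hc1 : c < 1) (n : ℕ) :
    ∫ x in (0:ℝ)..z, x ^ n * Real.exp (-(A * (x - c * z) ^ 2)) =
      (1 / 2) * ∑ k ∈ Finset.range (n + 1),
        (n.choose k : ℝ) * (c * z) ^ (n - k) * A ^ (-(((k : ℝ) + 1) / 2)) *
          (lowerIncGamma (((k : ℝ) + 1) / 2) (A * (1 - c) ^ 2 * z ^ 2) +
            (-1 : ℝ) ^ k * lowerIncGamma (((k : ℝ) + 1) / 2) (A * c ^ 2 * z ^ 2)) := by
  have hint : ∀ (k : ℕ) (a b : ℝ),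
      IntervalIntegrable (fun u : ℝ => u ^ k * Real.exp (-(A * u ^ 2))) volume a b :=
    fun k a b => Continuous.intervalIntegrable (by continuity) a b
  have hb1 : (0:ℝ) ≤ (1 - c) * z := mul_nonneg (by linarith) hz.le
  have hb2 : (0:ℝ) ≤ c * z := by positivity
  have key1 : ∀ k : ℕ, (∫ u in (-(c*z))..((1-c)*z), u ^ k * Real.exp (-(A * u ^ 2))) =
      (1/2) * A ^ (-(((k:ℝ)+1)/2)) *
        (lowerIncGamma (((k:ℝ)+1)/2) (A*(1-c)^2*z^2) +
          (-1:ℝ)^k * lowerIncGamma (((k:ℝ)+1)/2) (A*c^2*z^2)) := by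
    intro k
    rw [← intervalIntegral.integral_add_adjacent_intervals (hint k (-(c*z)) 0)
      (hint k 0 ((1-c)*z))]
    have hneg : (∫ u in (-(c*z))..(0:ℝ), u ^ k * Real.exp (-(A * u ^ 2))) =
        (-1:ℝ)^k * ∫ u in (0:ℝ)..(c*z), u ^ k * Real.exp (-(A * u ^ 2)) := by
      have h := intervalIntegral.integral_comp_neg (a := (0:ℝ)) (b := c*z)
        (fun u : ℝ => u ^ k * Real.exp (-(A * u ^ 2)))
      simp only [neg_zero] at h
      rw [← h, ← intervalIntegral.integral_const_mul]
      apply intervalIntegral.integral_congr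
      intro x _
      show (-x)^k * Real.exp (-(A*(-x)^2)) = (-1:ℝ)^k * (x^k * Real.exp (-(A*x^2)))
      rw [neg_sq, neg_pow]
      ring
    rw [hneg, key A hA k _ hb2, key A hA k _ hb1,
      show A * ((1-c)*z)^2 = A*(1-c)^2*z^2 by ring,
      show A * (c*z)^2 = A*c^2*z^2 by ring]
    ring
  have hsub := intervalIntegral.integral_comp_sub_right (a := (0:ℝ)) (b := z)
    (fun u => (u + c*z)^n * Real.exp (-(A*u^2))) (c*z)
  have hLHS : (∫ x in (0:ℝ)..z, x ^ n * Real.exp (-(A * (x - c * z) ^ 2))) =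
      ∫ u in (-(c*z))..((1-c)*z), (u + c*z)^n * Real.exp (-(A*u^2)) := by
    rw [show -(c*z) = 0 - c*z by ring, show (1-c)*z = z - c*z by ring, ← hsub]
    apply intervalIntegral.integral_congr
    intro x _
    show x ^ n * Real.exp (-(A * (x - c * z) ^ 2)) =
      (x - c*z + c*z)^n * Real.exp (-(A*(x - c*z)^2))
    rw [sub_add_cancel]
  rw [hLHS]
  have hexp : ∀ u : ℝ, (u + c*z)^n * Real.exp (-(A*u^2)) =
      ∑ k ∈ Finset.range (n+1),
        ((n.choose k : ℝ) * (c*z)^(n-k)) * (u^k * Real.exp (-(A*u^2))) := by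
    intro u
    rw [add_pow, Finset.sum_mul]
    apply Finset.sum_congr rfl
    intro k _
    ring
  rw [intervalIntegral.integral_congr (g := fun u => ∑ k ∈ Finset.range (n+1),
        ((n.choose k : ℝ) * (c*z)^(n-k)) * (u^k * Real.exp (-(A*u^2))))
    (fun x _ => hexp x)]
  rw [intervalIntegral.integral_finset_sum (fun k _ => (hint k _ _).const_mul _)]
  rw [Finset.mul_sum]
  apply Finset.sum_congr rfl
  intro k _
  rw [intervalIntegral.integral_const_mul, key1 k]
  ring
end

section
/- Let d > 0 and r > 0 with d ≥ r, let θ be a random variable uniformly distributed on [0, 2π], and set L = √( d² + r² + 2 d r cos θ ). Then for every l with d − r ≤ l ≤ d + r, the conditional distribution of the base-station-to-IRS distance satisfies P( L ≤ l ) = 1/2 + (1/π) arcsin( (l² − r² − d²) / (2 d r) ). Consequently, on the open interval (d − r, d + r), the cumulative distribution function l ↦ P(L ≤ l) is differentiable with derivative (density) f_L(l) = ( l / (π d r) ) / √( 1 − ( (l² − r² − d²)/(2 d r) )² ). -/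
open MeasureTheory Real Set



private lemma arccos_le_arccos' {x y : ℝ} (hx : -1 ≤ x) (hxy : x ≤ y) :
    Real.arccos y ≤ Real.arccos x := by
  rw [Real.arccos_eq_pi_div_two_sub_arcsin, Real.arccos_eq_pi_div_two_sub_arcsin]
  have := Real.monotone_arcsin hxy
  linarith

/-- Law of cosines distance distribution: let `d ≥ r > 0`, let `θ` be uniformly
distributed on `[0, 2π]`, and `L = √(d² + r² + 2 d r cos θ)`.  Then for `d - r ≤ l ≤ d + r`,
`P(L ≤ l) = 1/2 + (1/π) arcsin((l² - r² - d²)/(2 d r))`, and on `(d - r, d + r)` the CDF of `L`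
is differentiable with derivative `f_L(l) = (l/(π d r)) / √(1 - ((l² - r² - d²)/(2 d r))²)`. -/
theorem bs_irs_distance_distribution {Ω : Type*} [MeasurableSpace Ω]
    (μ : Measure Ω) [IsProbabilityMeasure μ]
    (d r : ℝ) (hd : 0 < d) (hr : 0 < r) (hrd : r ≤ d)
    (θ : Ω → ℝ) (hθ : Measurable θ)
    (hunif : Measure.map θ μ =
      (ENNReal.ofReal (2 * Real.pi))⁻¹ • volume.restrict (Set.Icc 0 (2 * Real.pi))) :
    (∀ l : ℝ, d - r ≤ l → l ≤ d + r →
        (μ {ω | Real.sqrt (d ^ 2 + r ^ 2 + 2 * d * r * Real.cos (θ ω)) ≤ l}).toReal =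
          1 / 2 + (1 / Real.pi) * Real.arcsin ((l ^ 2 - r ^ 2 - d ^ 2) / (2 * d * r)))
    ∧ (∀ l ∈ Set.Ioo (d - r) (d + r),
        HasDerivAt
          (fun l : ℝ =>
            (μ {ω | Real.sqrt (d ^ 2 + r ^ 2 + 2 * d * r * Real.cos (θ ω)) ≤ l}).toReal)
          ((l / (Real.pi * d * r)) /
            Real.sqrt (1 - ((l ^ 2 - r ^ 2 - d ^ 2) / (2 * d * r)) ^ 2)) l) := by
  have hpi := Real.pi_pos
  have hdr : (0:ℝ) < 2 * d * r := by positivity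
  set c : ℝ → ℝ := fun l => (l ^ 2 - r ^ 2 - d ^ 2) / (2 * d * r) with hc
  have key : ∀ l : ℝ, d - r ≤ l → l ≤ d + r →
      (μ {ω | Real.sqrt (d ^ 2 + r ^ 2 + 2 * d * r * Real.cos (θ ω)) ≤ l}).toReal =
        1 / 2 + (1 / Real.pi) * Real.arcsin (c l) := by
    intro l h1 h2
    have hl0 : 0 ≤ l := le_trans (by linarith) h1
    have hc1 : -1 ≤ c l := by
      rw [hc]
      rw [le_div_iff₀ hdr]
      nlinarith [sq_nonneg (d - r), mul_self_nonneg l]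
    have hc2 : c l ≤ 1 := by
      rw [hc, div_le_one hdr]
      nlinarith
    have hset : {ω | Real.sqrt (d ^ 2 + r ^ 2 + 2 * d * r * Real.cos (θ ω)) ≤ l}
        = θ ⁻¹' {x | Real.cos x ≤ c l} := by
      ext ω
      simp only [Set.mem_setOf_eq, Set.mem_preimage]
      rw [Real.sqrt_le_left hl0, hc, le_div_iff₀ hdr]
      constructor <;> intro h <;> nlinarith
    have hmeas : MeasurableSet {x : ℝ | Real.cos x ≤ c l} :=
      measurableSet_le Real.measurable_cos measurable_const
    rw [hset, ← Measure.map_apply hθ hmeas, hunif]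
    have hseteq : {x : ℝ | Real.cos x ≤ c l} ∩ Set.Icc 0 (2 * Real.pi)
        = Set.Icc (Real.arccos (c l)) (2 * Real.pi - Real.arccos (c l)) := by
      ext x
      simp only [Set.mem_inter_iff, Set.mem_setOf_eq, Set.mem_Icc]
      have ha0 := Real.arccos_nonneg (c l)
      have hapi := Real.arccos_le_pi (c l)
      constructor
      · rintro ⟨hcx, hx0, hx2⟩
        rcases le_total x Real.pi with hxp | hxp
        · have : Real.arccos (c l) ≤ Real.arccos (Real.cos x) :=
            arccos_le_arccos' (Real.neg_one_le_cos x) hcx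
          rw [Real.arccos_cos hx0 hxp] at this
          exact ⟨this, by linarith⟩
        · have hcx' : Real.cos (2 * Real.pi - x) ≤ c l := by
            rwa [Real.cos_two_pi_sub]
          have : Real.arccos (c l) ≤ Real.arccos (Real.cos (2 * Real.pi - x)) :=
            arccos_le_arccos' (Real.neg_one_le_cos _) hcx'
          rw [Real.arccos_cos (by linarith) (by linarith)] at this
          exact ⟨by linarith, by linarith⟩
      · rintro ⟨hax, hxa⟩
        refine ⟨?_, by linarith, by linarith⟩
        rcases le_total x Real.pi with hxp | hxp
        · have := Real.cos_le_cos_of_nonneg_of_le_pi ha0 hxp hax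
          rwa [Real.cos_arccos hc1 hc2] at this
        · have h1' : Real.cos x = Real.cos (2 * Real.pi - x) := (Real.cos_two_pi_sub x).symm
          have := Real.cos_le_cos_of_nonneg_of_le_pi ha0 (by linarith : 2 * Real.pi - x ≤ Real.pi)
            (by linarith)
          rw [Real.cos_arccos hc1 hc2] at this
          rw [h1']
          exact this
    rw [Measure.smul_apply, Measure.restrict_apply hmeas, hseteq, Real.volume_Icc]
    have ha0 := Real.arccos_nonneg (c l)
    have hapi := Real.arccos_le_pi (c l)
    rw [smul_eq_mul, ENNReal.toReal_mul, ENNReal.toReal_inv, ENNReal.toReal_ofReal (by linarith),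
      ENNReal.toReal_ofReal (by linarith)]
    rw [Real.arccos_eq_pi_div_two_sub_arcsin]
    field_simp
    ring
  constructor
  · intro l h1 h2; exact key l h1 h2
  · intro l hl
    have hc1 : c l ≠ -1 := by
      have : -1 < c l := by
        rw [hc, lt_div_iff₀ hdr]
        have hl0 : 0 ≤ d - r := by linarith
        nlinarith [hl.1, hl.2]
      exact ne_of_gt this
    have hc2 : c l ≠ 1 := by
      have : c l < 1 := by
        rw [hc, div_lt_one hdr]
        have hl0 : 0 ≤ l := le_trans (by linarith) hl.1.le
        nlinarith [hl.1, hl.2]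
      exact ne_of_lt this
    have hderiv_c : HasDerivAt c (2 * l / (2 * d * r)) l := by
      rw [hc]
      have : HasDerivAt (fun l : ℝ => l ^ 2 - r ^ 2 - d ^ 2) (2 * l) l := by
        simpa using (((hasDerivAt_pow 2 l).sub_const (r ^ 2)).sub_const (d ^ 2))
      simpa using this.div_const (2 * d * r)
    have harc : HasDerivAt (fun l => Real.arcsin (c l))
        (1 / Real.sqrt (1 - (c l) ^ 2) * (2 * l / (2 * d * r))) l :=
      (Real.hasDerivAt_arcsin hc1 hc2).comp l hderiv_c
    have hg : HasDerivAt (fun l => 1 / 2 + (1 / Real.pi) * Real.arcsin (c l))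
        ((l / (Real.pi * d * r)) / Real.sqrt (1 - (c l) ^ 2)) l := by
      have := (harc.const_mul (1 / Real.pi)).const_add (1/2 : ℝ)
      convert this using 1
      · rfl
      · rfl
      field_simp
    refine HasDerivAt.congr_of_eventuallyEq hg ?_
    filter_upwards [Ioo_mem_nhds hl.1 hl.2] with x hx
    exact key x hx.1.le hx.2.le
end
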